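/- A onesided subshift Σ is finite if and only if its limit set Ω_Σ = ⋂_j σ^j(Σ) is finite. -/

import Mathlib

/-- The onesided shift map. -/
def shiftN {A : Type*} (x : ℕ → A) : ℕ → A := fun i => x (i + 1)

namespace Stmt11Aux

variable {A : Type*} [Fintype A] [TopologicalSpace A] [DiscreteTopology A]

lemma shift_iterate (x : ℕ → A) (j i : ℕ) : shiftN^[j] x i = x (i + j) := by
  induction j generalizing x i with
  | zero => rfl
  | succ j ih =>
    rw [Function.iterate_succ_apply, ih]
    simp only [shiftN]
    ring_nf

lemma continuous_shiftN : Continuous (shiftN : (ℕ → A) → ℕ → A) :=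
  continuous_pi fun i => continuous_apply (i + 1)

/-- restriction to the first `n` coordinates -/
def res (n : ℕ) (x : ℕ → A) : Fin n → A := fun i => x i

/-- truncation of a word of length `n+1` to length `n` -/
def trunc (n : ℕ) (w : Fin (n + 1) → A) : Fin n → A := fun i => w i.castSucc

lemma trunc_res (n : ℕ) (x : ℕ → A) : trunc n (res (n + 1) x) = res n x := rfl

lemma iter_mem (T : Set (ℕ → A)) (hT : ∀ x ∈ T, shiftN x ∈ T) {x : ℕ → A}
    (hx : x ∈ T) (d : ℕ) : shiftN^[d] x ∈ T := by
  induction d with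
  | zero => exact hx
  | succ d ih => rw [Function.iterate_succ_apply']; exact hT _ ih

/-- If truncation is injective on words of length `n+1` of a forward-invariant set `T`,
then `T` is finite. -/
lemma finite_of_injOn_trunc (T : Set (ℕ → A)) (hT : ∀ x ∈ T, shiftN x ∈ T) (n : ℕ)
    (hinj : Set.InjOn (trunc n) (res (n + 1) '' T)) : T.Finite := by
  have key : Set.InjOn (res n) T := by
    intro x hx y hy hxy
    funext k
    induction k using Nat.strong_induction_on with
    | _ k ih =>
      by_cases hk : k < n
      · exact congrFun hxy ⟨k, hk⟩
      · push_neg at hk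
        set d := k - n with hd
        have hkd : k = n + d := by omega
        have hu : shiftN^[d] x ∈ T := iter_mem T hT hx d
        have hv : shiftN^[d] y ∈ T := iter_mem T hT hy d
        have hres : res n (shiftN^[d] x) = res n (shiftN^[d] y) := by
          funext i
          simp only [res, shift_iterate]
          exact ih (i + d) (by omega)
        have heq : res (n + 1) (shiftN^[d] x) = res (n + 1) (shiftN^[d] y) :=
          hinj ⟨_, hu, rfl⟩ ⟨_, hv, rfl⟩ (by rw [trunc_res, trunc_res, hres])
        have := congrFun heq ⟨n, Nat.lt_succ_self n⟩
        simp only [res, shift_iterate] at this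
        rw [hkd]
        simpa using this
  exact Set.Finite.of_finite_image (Set.toFinite _) key

/-- Morse–Hedlund type bound: an infinite forward-invariant set has at least `n+1`
initial words of length `n`. -/
lemma card_lower (T : Set (ℕ → A)) (hT : ∀ x ∈ T, shiftN x ∈ T) (hinf : T.Infinite) (n : ℕ) :
    n + 1 ≤ (res n '' T).ncard := by
  induction n with
  | zero =>
    have : (res 0 '' T).Nonempty := hinf.nonempty.image _
    have hfin : (res 0 '' T).Finite := Set.toFinite _
    have := (Set.ncard_pos hfin).mpr this
    omega
  | succ n ih =>
    have himg : res n '' T = trunc n '' (res (n + 1) '' T) := by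
      rw [← Set.image_comp]
      rfl
    have hlt : (res n '' T).ncard < (res (n + 1) '' T).ncard := by
      by_contra hle
      push_neg at hle
      have hle2 : (trunc n '' (res (n + 1) '' T)).ncard ≤ (res n '' T).ncard := by
        rw [himg]
      have heq : (trunc n '' (res (n + 1) '' T)).ncard = (res (n + 1) '' T).ncard :=
        le_antisymm (Set.ncard_image_le (Set.toFinite _)) (by rw [← himg]; exact hle)
      have hinj : Set.InjOn (trunc n) (res (n + 1) '' T) :=
        Set.injOn_of_ncard_image_eq heq (Set.toFinite _)
      exact hinf (finite_of_injOn_trunc T hT n hinj)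
    omega

end Stmt11Aux

open Stmt11Aux in
/-- A onesided subshift is finite iff its limit set is finite. -/
theorem stmt11 {A : Type*} [Fintype A] [TopologicalSpace A] [DiscreteTopology A]
    (S : Set (ℕ → A)) (hclosed : IsClosed S) (hinv : ∀ x ∈ S, shiftN x ∈ S) :
    S.Finite ↔ (⋂ j : ℕ, shiftN^[j] '' S).Finite := by
  constructor
  · intro hS
    refine Set.Finite.subset hS ?_
    intro x hx
    have := Set.mem_iInter.mp hx 0
    simpa using this
  · intro hΩ
    by_contra hS
    have hSinf : S.Infinite := hS
    set T : ℕ → Set (ℕ → A) := fun j => shiftN^[j] '' S with hTdef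
    have hTsub : ∀ j, T (j + 1) ⊆ T j := by
      intro j x hx
      obtain ⟨s, hs, rfl⟩ := hx
      rw [Function.iterate_succ_apply]
      exact ⟨shiftN s, hinv s hs, rfl⟩
    have hTinv : ∀ j, ∀ x ∈ T j, shiftN x ∈ T j := by
      intro j x hx
      obtain ⟨s, hs, rfl⟩ := hx
      refine ⟨shiftN s, hinv s hs, ?_⟩
      rw [← Function.iterate_succ_apply, Function.iterate_succ_apply']
    have hTinf : ∀ j, (T j).Infinite := by
      intro j
      by_contra hfin
      rw [Set.not_infinite] at hfin
      apply hSinf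
      have hinjS : Set.InjOn (fun x => (res j x, shiftN^[j] x)) S := by
        intro x hx y hy hxy
        simp only [Prod.mk.injEq] at hxy
        funext i
        by_cases hij : i < j
        · exact congrFun hxy.1 ⟨i, hij⟩
        · push_neg at hij
          have := congrFun hxy.2 (i - j)
          rw [shift_iterate, shift_iterate] at this
          have hi : i - j + j = i := by omega
          rwa [hi] at this
      have himfin : ((fun x => (res j x, shiftN^[j] x)) '' S).Finite := by
        refine Set.Finite.subset ((Set.toFinite (Set.univ : Set (Fin j → A))).prod hfin) ?_
        rintro p ⟨x, hx, rfl⟩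
        exact ⟨trivial, ⟨x, hx, rfl⟩⟩
      exact Set.Finite.of_finite_image himfin hinjS
    -- compactness
    have hScomp : IsCompact S := hclosed.isCompact
    have hTcomp : ∀ j, IsCompact (T j) := fun j =>
      hScomp.image (continuous_shiftN.iterate j)
    have hTclosed : ∀ j, IsClosed (T j) := fun j => (hTcomp j).isClosed
    set N : ℕ := (⋂ j : ℕ, shiftN^[j] '' S).ncard with hNdef
    set W : ℕ → Set (Fin N → A) := fun j => res N '' T j with hWdef
    have hWanti : ∀ i j, i ≤ j → W j ⊆ W i := fun i j hij =>
      Set.image_mono (by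
        intro x hx
        induction j with
        | zero => simpa [Nat.le_zero.mp hij] using hx
        | succ j ihj =>
          rcases Nat.lt_or_ge i (j + 1) with h | h
          · exact ihj (by omega) (hTsub j hx)
          · have : i = j + 1 := by omega
            rwa [this])
    -- the cardinalities stabilize at the infimum
    obtain ⟨J, hJ⟩ : ∃ J, (W J).ncard = sInf (Set.range fun j => (W j).ncard) :=
      Nat.sInf_mem (Set.range_nonempty _)
    have hWstab : ∀ j, J ≤ j → W j = W J := by
      intro j hj
      refine Set.eq_of_subset_of_ncard_le (hWanti J j hj) ?_ (Set.toFinite _)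
      rw [hJ]
      exact Nat.sInf_le ⟨j, rfl⟩
    -- every word in W J is the initial word of a point of the limit set
    have hkey : W J ⊆ res N '' (⋂ j : ℕ, shiftN^[j] '' S) := by
      intro w hw
      set C : ℕ → Set (ℕ → A) := fun j => T j ∩ res N ⁻¹' {w} with hCdef
      have hpreclosed : IsClosed (res N ⁻¹' {w} : Set (ℕ → A)) := by
        have : (res N ⁻¹' {w} : Set (ℕ → A)) = ⋂ i : Fin N, {x : ℕ → A | x i = w i} := by
          ext x
          simp [res, funext_iff]
        rw [this]
        exact isClosed_iInter fun i => isClosed_eq (continuous_apply _) continuous_const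
      have hCne : ∀ j, (C j).Nonempty := by
        intro j
        have hwj : w ∈ W j := by
          rcases le_total J j with h | h
          · rw [hWstab j h]; exact hw
          · exact hWanti j J h hw
        obtain ⟨x, hx, hxw⟩ := hwj
        exact ⟨x, hx, hxw⟩
      have hCsub : ∀ j, C j ⊆ C (j + 1) → True := fun _ _ => trivial
      have hnon : (⋂ j, C j).Nonempty := by
        refine IsCompact.nonempty_iInter_of_sequence_nonempty_isCompact_isClosed C
          (fun j => Set.inter_subset_inter_left _ (hTsub j)) hCne
          ((hTcomp 0).inter_right hpreclosed)
          (fun j => (hTclosed j).inter hpreclosed)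
      obtain ⟨x, hx⟩ := hnon
      have hxΩ : x ∈ ⋂ j : ℕ, shiftN^[j] '' S := by
        rw [Set.mem_iInter]
        intro j
        exact (Set.mem_iInter.mp hx j).1
      have hxw : res N x = w := (Set.mem_iInter.mp hx 0).2
      exact ⟨x, hxΩ, hxw⟩
    have h1 : N + 1 ≤ (W J).ncard := card_lower (T J) (hTinv J) (hTinf J) N
    have h2 : (W J).ncard ≤ (res N '' (⋂ j : ℕ, shiftN^[j] '' S)).ncard :=
      Set.ncard_le_ncard hkey (Set.toFinite _)
    have h3 : (res N '' (⋂ j : ℕ, shiftN^[j] '' S)).ncard ≤ N :=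
      Set.ncard_image_le hΩ
    omega
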